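/- Let T ⊂ ℝ² be the triangle with vertices A = (0,0), B = (√3, 0), C = (√3/2, 3/2), and let G be the group of isometries of ℝ² generated by reflections across the three lines containing the edges of T. Then the orbit G·A of the vertex A is the lattice {a·(0,3) + b·(3√3/2, 3/2) : a, b ∈ ℤ}. -/

import Mathlib

noncomputable section
open EuclideanGeometry

local notation "V2" => EuclideanSpace ℝ (Fin 2)

lemma reflect_pair_apply (p q x y : V2) (t : ℝ)
    (hy : y = AffineMap.lineMap p q t)
    (horth : inner ℝ (q - p) (x - y) = (0:ℝ)) :
    EuclideanGeometry.reflection (affineSpan ℝ {p, q}) x = (y - x) + y := by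
  have hy' : y ∈ affineSpan ℝ ({p, q} : Set V2) := hy ▸ AffineMap.lineMap_mem_affineSpan_pair t p q
  have hdir : (affineSpan ℝ ({p, q} : Set V2)).direction = ℝ ∙ (q - p) := by
    rw [direction_affineSpan, vectorSpan_pair_rev, vsub_eq_sub]
  have hmem : y ∈ (affineSpan ℝ ({p, q} : Set V2) : Set V2) ∩
      AffineSubspace.mk' x (affineSpan ℝ ({p, q} : Set V2)).directionᗮ := by
    refine ⟨hy', ?_⟩
    rw [SetLike.mem_coe, AffineSubspace.mem_mk', hdir,
      Submodule.mem_orthogonal_singleton_iff_inner_right]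
    have : (y -ᵥ x : V2) = -(x - y) := by rw [vsub_eq_sub]; abel
    rw [this, inner_neg_right, horth, neg_zero]
  rw [EuclideanGeometry.inter_eq_singleton_orthogonalProjection x,
    Set.mem_singleton_iff] at hmem
  rw [EuclideanGeometry.reflection_apply', ← hmem]
  rfl

lemma sqrt3_mul_self : Real.sqrt 3 * Real.sqrt 3 = 3 :=
  Real.mul_self_sqrt (by norm_num)

lemma sqrt3_pos : (0:ℝ) < Real.sqrt 3 := Real.sqrt_pos.mpr (by norm_num)

lemma g1_apply (p q x : V2) (hp : p = !₂[0, 0]) (hq : q = !₂[Real.sqrt 3, 0]) :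
    EuclideanGeometry.reflection (affineSpan ℝ {p, q}) x = (!₂[x 0, -x 1] : V2) := by
  have h3 := sqrt3_mul_self
  have hne := ne_of_gt sqrt3_pos
  rw [reflect_pair_apply p q x (!₂[x 0, 0]) (x 0 / Real.sqrt 3)]
  · ext i
    fin_cases i <;>
      simp [PiLp.add_apply, PiLp.sub_apply] <;> ring
  · subst hp hq
    ext i
    fin_cases i <;>
      simp [AffineMap.lineMap_apply, vsub_eq_sub, PiLp.add_apply, PiLp.sub_apply,
        PiLp.smul_apply, smul_eq_mul, vadd_eq_add]
  · subst hp hq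
    simp [PiLp.inner_apply, RCLike.inner_apply, Fin.sum_univ_two, PiLp.sub_apply,
      starRingEnd_apply]

lemma g2_apply (p q x : V2) (hp : p = !₂[0, 0]) (hq : q = !₂[Real.sqrt 3 / 2, 3 / 2]) :
    EuclideanGeometry.reflection (affineSpan ℝ {p, q}) x =
      (!₂[-(x 0) / 2 + Real.sqrt 3 * x 1 / 2, Real.sqrt 3 * x 0 / 2 + x 1 / 2] : V2) := by
  have h3 := sqrt3_mul_self
  rw [reflect_pair_apply p q x
    (!₂[x 0 / 4 + Real.sqrt 3 * x 1 / 4, Real.sqrt 3 * x 0 / 4 + 3 * x 1 / 4])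
    (Real.sqrt 3 * x 0 / 6 + x 1 / 2)]
  · ext i
    fin_cases i <;>
      · simp [PiLp.add_apply, PiLp.sub_apply]
        ring
  · subst hp hq
    ext i
    fin_cases i <;>
      simp [AffineMap.lineMap_apply, vsub_eq_sub, PiLp.add_apply, PiLp.sub_apply,
        PiLp.smul_apply, smul_eq_mul, vadd_eq_add]
    · linear_combination (-(x 0) / 12) * h3
    · ring
  · subst hp hq
    simp [PiLp.inner_apply, RCLike.inner_apply, Fin.sum_univ_two, PiLp.sub_apply,
      starRingEnd_apply]
    linear_combination (-(x 1) / 8) * h3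

lemma g3_apply (p q x : V2) (hp : p = !₂[Real.sqrt 3, 0]) (hq : q = !₂[Real.sqrt 3 / 2, 3 / 2]) :
    EuclideanGeometry.reflection (affineSpan ℝ {p, q}) x =
      (!₂[-(x 0) / 2 - Real.sqrt 3 * x 1 / 2 + 3 * Real.sqrt 3 / 2,
         -(Real.sqrt 3 * x 0) / 2 + x 1 / 2 + 3 / 2] : V2) := by
  have h3 := sqrt3_mul_self
  rw [reflect_pair_apply p q x
    (!₂[x 0 / 4 - Real.sqrt 3 * x 1 / 4 + 3 * Real.sqrt 3 / 4,
       -(Real.sqrt 3 * x 0) / 4 + 3 * x 1 / 4 + 3 / 4])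
    (x 1 / 2 - Real.sqrt 3 * x 0 / 6 + 1 / 2)]
  · ext i
    fin_cases i <;>
      · simp [PiLp.add_apply, PiLp.sub_apply]
        ring
  · subst hp hq
    ext i
    fin_cases i <;>
      simp [AffineMap.lineMap_apply, vsub_eq_sub, PiLp.add_apply, PiLp.sub_apply,
        PiLp.smul_apply, smul_eq_mul, vadd_eq_add]
    · linear_combination (-(x 0) / 12) * h3
    · ring
  · subst hp hq
    simp [PiLp.inner_apply, RCLike.inner_apply, Fin.sum_univ_two, PiLp.sub_apply,
      starRingEnd_apply]
    linear_combination ((3 - x 1) / 8) * h3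

lemma zpow_translate (e : V2 ≃ᵃⁱ[ℝ] V2) (v : V2) (he : ∀ x, e x = x + v) (n : ℤ) :
    ∀ x : V2, (e ^ n) x = x + (n : ℝ) • v := by
  have hinv : ∀ x : V2, e⁻¹ x = x - v := by
    intro x
    have h2 : e (x - v) = x := by rw [he]; abel
    rw [AffineIsometryEquiv.coe_inv]
    nth_rewrite 1 [← h2]
    rw [AffineIsometryEquiv.symm_apply_apply]
  induction n using Int.induction_on with
  | zero => intro x; simp
  | succ n ih =>
    intro x
    rw [zpow_add_one]
    have : (e ^ (n : ℤ) * e) x = (e ^ (n : ℤ)) (e x) := rfl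
    rw [this, he, ih]
    push_cast
    rw [add_smul, one_smul]
    abel
  | pred n ih =>
    intro x
    rw [zpow_sub_one]
    have : (e ^ (-n : ℤ) * e⁻¹) x = (e ^ (-n : ℤ)) (e⁻¹ x) := rfl
    rw [this, hinv, ih]
    push_cast
    rw [sub_smul, one_smul]
    abel

set_option maxHeartbeats 1000000 in
/-- Let `T ⊂ ℝ²` be the triangle with vertices `A = (0,0)`,
`B = (√3, 0)`, `C = (√3/2, 3/2)` and let `G` be the group of isometries of `ℝ²` generated by
the reflections across the three lines containing the edges of `T`. Then the orbit `G·A` is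
the lattice `{a•(0,3) + b•(3√3/2, 3/2) : a b : ℤ}`. -/
theorem orbit_of_vertex_is_lattice
    (A B C : EuclideanSpace ℝ (Fin 2))
    (hA : A = !₂[0, 0]) (hB : B = !₂[Real.sqrt 3, 0])
    (hC : C = !₂[Real.sqrt 3 / 2, 3 / 2])
    (G : Subgroup (EuclideanSpace ℝ (Fin 2) ≃ᵃⁱ[ℝ] EuclideanSpace ℝ (Fin 2)))
    (hG : G = Subgroup.closure
      {EuclideanGeometry.reflection (affineSpan ℝ {A, B}),
       EuclideanGeometry.reflection (affineSpan ℝ {A, C}),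
       EuclideanGeometry.reflection (affineSpan ℝ {B, C})}) :
    {x : EuclideanSpace ℝ (Fin 2) | ∃ g ∈ G, g A = x} =
      {x : EuclideanSpace ℝ (Fin 2) | ∃ a b : ℤ,
        x = (a : ℝ) • (!₂[0, 3] : EuclideanSpace ℝ (Fin 2)) +
            (b : ℝ) • (!₂[3 * Real.sqrt 3 / 2, 3 / 2] : EuclideanSpace ℝ (Fin 2))} := by
  subst hG
  have h3 := sqrt3_mul_self
  set r1 := EuclideanGeometry.reflection (affineSpan ℝ {A, B}) with hr1
  set r2 := EuclideanGeometry.reflection (affineSpan ℝ {A, C}) with hr2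
  set r3 := EuclideanGeometry.reflection (affineSpan ℝ {B, C}) with hr3
  set u : V2 := !₂[0, 3] with hu
  set v : V2 := !₂[3 * Real.sqrt 3 / 2, 3 / 2] with hv
  set w : V2 := !₂[-(3 * Real.sqrt 3) / 2, 3 / 2] with hw
  set L : V2 → Prop := fun x => ∃ a b : ℤ, x = (a : ℝ) • u + (b : ℝ) • v with hLdef
  have e1 : ∀ z : V2, r1 z = !₂[z 0, -z 1] := fun z => g1_apply A B z hA hB
  have e2 : ∀ z : V2, r2 z = !₂[-(z 0) / 2 + Real.sqrt 3 * z 1 / 2,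
      Real.sqrt 3 * z 0 / 2 + z 1 / 2] := fun z => g2_apply A C z hA hC
  have e3 : ∀ z : V2, r3 z = !₂[-(z 0) / 2 - Real.sqrt 3 * z 1 / 2 + 3 * Real.sqrt 3 / 2,
      -(Real.sqrt 3 * z 0) / 2 + z 1 / 2 + 3 / 2] := fun z => g3_apply B C z hB hC
  -- each generator preserves the lattice
  have hL1 : ∀ y, L y → L (r1 y) := by
    rintro y ⟨a, b, rfl⟩
    refine ⟨-a - b, b, ?_⟩
    rw [e1]
    ext i
    fin_cases i <;> simp [hu, hv, PiLp.add_apply, PiLp.smul_apply, smul_eq_mul] <;>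
      (try push_cast) <;> (try ring)
  have hL2 : ∀ y, L y → L (r2 y) := by
    rintro y ⟨a, b, rfl⟩
    refine ⟨b, a, ?_⟩
    rw [e2]
    ext i
    fin_cases i <;>
      simp [hu, hv, PiLp.add_apply, PiLp.smul_apply, smul_eq_mul] <;> push_cast
    · ring
    · linear_combination (3 * (b : ℝ) / 4) * h3
  have hL3 : ∀ y, L y → L (r3 y) := by
    rintro y ⟨a, b, rfl⟩
    refine ⟨a, 1 - a - b, ?_⟩
    rw [e3]
    ext i
    fin_cases i <;>
      simp [hu, hv, PiLp.add_apply, PiLp.smul_apply, smul_eq_mul] <;> push_cast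
    · ring
    · linear_combination (-3 * (b : ℝ) / 4) * h3
  have hi1 : r1⁻¹ = r1 := EuclideanGeometry.reflection_symm _
  have hi2 : r2⁻¹ = r2 := EuclideanGeometry.reflection_symm _
  have hi3 : r3⁻¹ = r3 := EuclideanGeometry.reflection_symm _
  have hLA : L A := by
    refine ⟨0, 0, ?_⟩
    ext i
    fin_cases i <;> simp [hA, hu, hv, PiLp.add_apply, PiLp.smul_apply]
  -- translations
  have hm1 : r1 ∈ Subgroup.closure {r1, r2, r3} :=
    Subgroup.subset_closure (Set.mem_insert _ _)
  have hm2 : r2 ∈ Subgroup.closure {r1, r2, r3} :=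
    Subgroup.subset_closure (Set.mem_insert_of_mem _ (Set.mem_insert _ _))
  have hm3 : r3 ∈ Subgroup.closure {r1, r2, r3} :=
    Subgroup.subset_closure (Set.mem_insert_of_mem _ (Set.mem_insert_of_mem _ rfl))
  have hT : ∀ x : V2, (r3 * r2 * r1 * r2) x = x + v := by
    intro x
    simp only [AffineIsometryEquiv.coe_mul, Function.comp_apply, e1, e2, e3,
      Matrix.cons_val_zero, Matrix.cons_val_one, Matrix.head_cons]
    ext i
    fin_cases i <;> simp [hv, PiLp.add_apply]
    · linear_combination ((3 * x 0 - Real.sqrt 3 * x 1) / 8) * h3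
    · linear_combination ((Real.sqrt 3 * x 0 + 3 * x 1) / 8) * h3
  have hTW : ∀ x : V2, (r2 * r1 * r3 * r1) x = x + w := by
    intro x
    simp only [AffineIsometryEquiv.coe_mul, Function.comp_apply, e1, e2, e3,
      Matrix.cons_val_zero, Matrix.cons_val_one, Matrix.head_cons]
    ext i
    fin_cases i <;> simp [hw, PiLp.add_apply]
    · linear_combination (x 0 / 4) * h3
    · linear_combination ((x 1 + 3) / 4) * h3
  have hTmem : r3 * r2 * r1 * r2 ∈ Subgroup.closure {r1, r2, r3} :=
    mul_mem (mul_mem (mul_mem hm3 hm2) hm1) hm2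
  have hTWmem : r2 * r1 * r3 * r1 ∈ Subgroup.closure {r1, r2, r3} :=
    mul_mem (mul_mem (mul_mem hm2 hm1) hm3) hm1
  ext x
  simp only [Set.mem_setOf_eq]
  constructor
  · rintro ⟨g, hg, rfl⟩
    have key : (∀ y, L y → L (g y)) ∧ (∀ y, L y → L (g⁻¹ y)) := by
      induction hg using Subgroup.closure_induction with
      | mem z hz =>
        simp only [Set.mem_insert_iff, Set.mem_singleton_iff] at hz
        rcases hz with rfl | rfl | rfl
        · exact ⟨hL1, by rw [hi1]; exact hL1⟩
        · exact ⟨hL2, by rw [hi2]; exact hL2⟩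
        · exact ⟨hL3, by rw [hi3]; exact hL3⟩
      | one => simp only [inv_one]; exact ⟨fun y hy => hy, fun y hy => hy⟩
      | mul z z' hz hz' ihz ihz' =>
        refine ⟨fun y hy => ?_, fun y hy => ?_⟩
        · have : (z * z') y = z (z' y) := rfl
          rw [this]; exact ihz.1 _ (ihz'.1 _ hy)
        · rw [mul_inv_rev]
          have : (z'⁻¹ * z⁻¹) y = z'⁻¹ (z⁻¹ y) := rfl
          rw [this]; exact ihz'.2 _ (ihz.2 _ hy)
      | inv z hz ihz =>
        refine ⟨ihz.2, ?_⟩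
        rw [inv_inv]; exact ihz.1
    exact key.1 A hLA
  · rintro ⟨a, b, rfl⟩
    refine ⟨(r2 * r1 * r3 * r1) ^ a * (r3 * r2 * r1 * r2) ^ (a + b),
      mul_mem (zpow_mem hTWmem a) (zpow_mem hTmem (a + b)), ?_⟩
    have happ : ((r2 * r1 * r3 * r1) ^ a * (r3 * r2 * r1 * r2) ^ (a + b)) A =
        ((r2 * r1 * r3 * r1) ^ a) (((r3 * r2 * r1 * r2) ^ (a + b)) A) := rfl
    rw [happ, zpow_translate _ v hT, zpow_translate _ w hTW]
    ext i
    fin_cases i <;>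
      · simp [hA, hu, hv, hw, PiLp.add_apply, PiLp.smul_apply, smul_eq_mul]
        push_cast
        ring
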